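/- Let A = 𝔽₂[x,y]/(xy, x³ + y³, x⁴) (so A is the mod 2 cohomology ring of S³/Q_{8m} for m even). In A ⊗_{𝔽₂} A, set τ(z) = z⊗1 + 1⊗z, v₂ = τ(x)²(1⊗y) + τ(x)τ(y)(1⊗y), and v₃ = τ(x)²(y⊗1) + τ(y)²(x⊗1). Then v₂ · v₃ = x³ ⊗ y³ ≠ 0. -/

import Mathlib

open MvPolynomial TensorProduct

/-- `A = 𝔽₂[x,y]/(xy, x³ + y³, x⁴)`, the mod 2 cohomology ring of
`S³/Q_{8m}` for `m` even. -/
noncomputable abbrev A16 : Type :=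
  MvPolynomial Bool (ZMod 2) ⧸
    Ideal.span ({X false * X true, X false ^ 3 + X true ^ 3, X false ^ 4} :
      Set (MvPolynomial Bool (ZMod 2)))

noncomputable def x16 : A16 := Ideal.Quotient.mk _ (X false)
noncomputable def y16 : A16 := Ideal.Quotient.mk _ (X true)

/-- `τ(z) = z ⊗ 1 + 1 ⊗ z` in `A ⊗[𝔽₂] A`. -/
noncomputable def τ16 (z : A16) : A16 ⊗[ZMod 2] A16 := z ⊗ₜ 1 + 1 ⊗ₜ z

noncomputable def v2 : A16 ⊗[ZMod 2] A16 :=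
  τ16 x16 ^ 2 * ((1 : A16) ⊗ₜ y16) + τ16 x16 * τ16 y16 * ((1 : A16) ⊗ₜ y16)

noncomputable def v3' : A16 ⊗[ZMod 2] A16 :=
  τ16 x16 ^ 2 * (y16 ⊗ₜ (1 : A16)) + τ16 y16 ^ 2 * (x16 ⊗ₜ (1 : A16))

section Aux

noncomputable abbrev R16 := MvPolynomial Bool (ZMod 2)

noncomputable abbrev I16 : Ideal R16 :=
  Ideal.span ({X false * X true, X false ^ 3 + X true ^ 3, X false ^ 4} : Set R16)

noncomputable def L16 : R16 →ₗ[ZMod 2] ZMod 2 :=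
  lcoeff (ZMod 2) (Finsupp.single false 3) + lcoeff (ZMod 2) (Finsupp.single true 3)

lemma L16_apply (p : R16) :
    L16 p = coeff (Finsupp.single false 3) p + coeff (Finsupp.single true 3) p := rfl

lemma L16_vanish : ∀ p ∈ I16, L16 p = 0 := by
  intro p hp
  rw [Ideal.mem_span_insert] at hp
  obtain ⟨r1, z1, hz1, rfl⟩ := hp
  rw [Ideal.mem_span_insert] at hz1
  obtain ⟨r2, z2, hz2, rfl⟩ := hz1
  rw [Ideal.mem_span_singleton] at hz2
  obtain ⟨w, rfl⟩ := hz2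
  have e1 : X (R := ZMod 2) false * X true
      = monomial (Finsupp.single false 1 + Finsupp.single true 1) 1 := by
    rw [X, X, monomial_mul, one_mul]
  have e3 : (X (R := ZMod 2) false) ^ 3 = monomial (Finsupp.single false 3) 1 :=
    X_pow_eq_monomial ..
  have e3' : (X (R := ZMod 2) true) ^ 3 = monomial (Finsupp.single true 3) 1 :=
    X_pow_eq_monomial ..
  have e4 : (X (R := ZMod 2) false) ^ 4 = monomial (Finsupp.single false 4) 1 :=
    X_pow_eq_monomial ..
  have h1 : ¬ (Finsupp.single false 1 + Finsupp.single true 1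
      ≤ Finsupp.single (M := ℕ) false 3) := by
    intro h; simpa using h true
  have h2 : ¬ (Finsupp.single false 1 + Finsupp.single true 1
      ≤ Finsupp.single (M := ℕ) true 3) := by
    intro h; simpa using h false
  have h3 : ¬ (Finsupp.single (M := ℕ) true 3 ≤ Finsupp.single false 3) := by
    intro h; simpa using h true
  have h4 : ¬ (Finsupp.single (M := ℕ) false 3 ≤ Finsupp.single true 3) := by
    intro h; simpa using h false
  have h5 : ¬ (Finsupp.single (M := ℕ) false 4 ≤ Finsupp.single false 3) := by
    intro h; simpa using h false
  have h6 : ¬ (Finsupp.single (M := ℕ) false 4 ≤ Finsupp.single true 3) := by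
    intro h; simpa using h false
  simp only [L16_apply, coeff_add, mul_add, add_mul, e1, e3, e3', e4, coeff_mul_monomial',
    coeff_monomial_mul', h1, h2, h3, h4, h5, h6, if_neg, if_pos le_rfl, tsub_self,
    not_false_eq_true, mul_one, one_mul]
  ring_nf
  simp [show (2 : ZMod 2) = 0 from rfl]

noncomputable def f16 : A16 →ₗ[ZMod 2] ZMod 2 :=
  (Submodule.liftQ (Submodule.restrictScalars (ZMod 2) I16) L16
      (fun p hp => L16_vanish p hp)) ∘ₗ
    (Submodule.Quotient.restrictScalarsEquiv (ZMod 2) I16).symm.toLinearMap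

lemma f16_mk (p : R16) : f16 (Ideal.Quotient.mk I16 p) = L16 p := by
  rw [f16, LinearMap.comp_apply, LinearEquiv.coe_toLinearMap, ← Ideal.Quotient.mk_eq_mk,
    Submodule.Quotient.restrictScalarsEquiv_symm_mk]
  rfl

lemma f16_x3 : f16 (x16 ^ 3) = 1 := by
  have h : x16 ^ 3 = Ideal.Quotient.mk I16 ((X false) ^ 3) := by
    rw [x16, map_pow]
  rw [h, f16_mk, L16_apply]
  simp [coeff_X_pow, Finsupp.single_eq_single_iff]

lemma f16_y3 : f16 (y16 ^ 3) = 1 := by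
  have h : y16 ^ 3 = Ideal.Quotient.mk I16 ((X true) ^ 3) := by
    rw [y16, map_pow]
  rw [h, f16_mk, L16_apply]
  simp [coeff_X_pow, Finsupp.single_eq_single_iff]

end Aux

set_option maxHeartbeats 2000000 in
/-- In `A ⊗[𝔽₂] A` with `A = 𝔽₂[x,y]/(xy, x³+y³, x⁴)`,
`v₂ · v₃ = x³ ⊗ y³ ≠ 0`. -/
theorem stmt16 :
    v2 * v3' = (x16 ^ 3) ⊗ₜ (y16 ^ 3) ∧ v2 * v3' ≠ 0 := by
  have h2A : (2 : A16) = 0 := by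
    have : ((algebraMap (ZMod 2) A16) 2) = 2 := map_ofNat _ 2
    rw [show (2 : ZMod 2) = 0 by decide, map_zero] at this
    exact this.symm
  have hxy : x16 * y16 = 0 := by
    rw [x16, y16, ← map_mul]
    exact Ideal.Quotient.eq_zero_iff_mem.mpr (Ideal.subset_span (by simp))
  have hsum : x16 ^ 3 + y16 ^ 3 = 0 := by
    rw [x16, y16, ← map_pow, ← map_pow, ← map_add]
    exact Ideal.Quotient.eq_zero_iff_mem.mpr (Ideal.subset_span (by simp))
  have hxy3 : x16 ^ 3 = y16 ^ 3 := by
    linear_combination hsum - y16 ^ 3 * h2A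
  set a : A16 ⊗[ZMod 2] A16 := x16 ⊗ₜ 1 with ha
  set b : A16 ⊗[ZMod 2] A16 := (1 : A16) ⊗ₜ x16 with hb
  set c : A16 ⊗[ZMod 2] A16 := y16 ⊗ₜ 1 with hc
  set d : A16 ⊗[ZMod 2] A16 := (1 : A16) ⊗ₜ y16 with hd
  have h1 : a * c = 0 := by
    rw [ha, hc, Algebra.TensorProduct.tmul_mul_tmul, hxy, mul_one, zero_tmul]
  have h2 : b * d = 0 := by
    rw [hb, hd, Algebra.TensorProduct.tmul_mul_tmul, hxy, mul_one, tmul_zero]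
  have h3 : b ^ 3 = d ^ 3 := by
    rw [hb, hd, Algebra.TensorProduct.tmul_pow, Algebra.TensorProduct.tmul_pow, one_pow, hxy3]
  have key : v2 * v3' = (x16 ^ 3) ⊗ₜ (y16 ^ 3) := by
    have hr : (x16 ^ 3) ⊗ₜ[ZMod 2] (y16 ^ 3) = a ^ 3 * d ^ 3 := by
      rw [ha, hd, Algebra.TensorProduct.tmul_pow, Algebra.TensorProduct.tmul_pow,
        Algebra.TensorProduct.tmul_mul_tmul, one_pow, mul_one, one_mul]
    have hv2 : v2 = (a + b) ^ 2 * d + (a + b) * (c + d) * d := by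
      rw [v2, τ16, τ16, ← ha, ← hb, ← hc, ← hd]
    have hv3 : v3' = (a + b) ^ 2 * c + (c + d) ^ 2 * a := by
      rw [v3', τ16, τ16, ← ha, ← hb, ← hc, ← hd]
    rw [hv2, hv3, hr]
    linear_combination (a^3*d + 4*a^2*b*d + 6*a*b^2*d + 2*a^2*c*d + 3*a^2*d^2 + 4*b^3*d
        + 5*a*b*c*d + 7*a*b*d^2 + 4*b^2*c*d + 5*b^2*d^2 + a*c^2*d + 3*a*c*d^2 + 3*a*d^3
        + b*c^2*d + 3*b*c*d^2 + 3*b*d^3) * h1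
      + (2*a^2*d^2 + b^3*c + a*b*d^2 + b^2*c^2 + b^2*c*d + a*d^3 + a^2*b^2) * h2
      - a^2*d * h3
  refine ⟨key, ?_⟩
  rw [key]
  intro hzero
  have hF := congrArg ((TensorProduct.lid (ZMod 2) (ZMod 2)).toLinearMap ∘ₗ TensorProduct.map f16 f16) hzero
  simp only [LinearMap.comp_apply, map_zero, TensorProduct.map_tmul, LinearEquiv.coe_coe,
    TensorProduct.lid_tmul, f16_x3, f16_y3, one_smul] at hF
  exact one_ne_zero hF
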